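/- Let G be a finite group, let p_1, p_2 be distinct primes, and let P_1 be a Sylow p_1-subgroup and P_2 a Sylow p_2-subgroup of G such that G = N_G(P_1) N_G(P_2). Then for every Sylow p_1-subgroup Q_1 and every Sylow p_2-subgroup Q_2 of G, the number of elements x ∈ G satisfying both P_1^x = Q_1 and P_2^x = Q_2 is at least |N_G(P_1) ∩ N_G(P_2)|. -/

import Mathlib

open scoped Pointwise

/-- The conjugate subgroup `H^x = x⁻¹ H x`. -/
def conjSub {G : Type*} [Group G] (H : Subgroup G) (x : G) : Subgroup G :=
  H.map (MulAut.conj x⁻¹).toMonoidHom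

lemma mem_conjSub {G : Type*} [Group G] {H : Subgroup G} {g x : G} :
    x ∈ conjSub H g ↔ g * x * g⁻¹ ∈ H := by
  simp only [conjSub, Subgroup.mem_map, MulEquiv.coe_toMonoidHom, MulAut.conj_apply]
  constructor
  · rintro ⟨y, hy, rfl⟩
    have e : g * (g⁻¹ * y * g⁻¹⁻¹) * g⁻¹ = y := by group
    rwa [e]
  · intro h
    exact ⟨g * x * g⁻¹, h, by group⟩

lemma conjSub_mul {G : Type*} [Group G] (H : Subgroup G) (a b : G) :
    conjSub H (a * b) = conjSub (conjSub H a) b := by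
  ext x
  simp only [mem_conjSub]
  rw [show a * b * x * (a * b)⁻¹ = a * (b * x * b⁻¹) * a⁻¹ from by group]

lemma conjSub_of_mem_normalizer {G : Type*} [Group G] {H : Subgroup G} {n : G}
    (hn : n ∈ Subgroup.normalizer (H : Set G)) : conjSub H n = H := by
  ext x
  rw [mem_conjSub]
  exact (Subgroup.mem_normalizer_iff.mp hn x).symm

lemma conjSub_eq_of_smul {G : Type*} [Group G] {p : ℕ} {P Q : Sylow p G} {a : G}
    (h : a • P = Q) : conjSub (P : Subgroup G) a⁻¹ = (Q : Subgroup G) := by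
  have : ((a • P : Sylow p G) : Subgroup G) = (Q : Subgroup G) := by rw [h]
  rw [← this]
  ext x
  rw [mem_conjSub]
  rw [Sylow.smul_def, Sylow.pointwise_smul_def,
    Subgroup.mem_pointwise_smul_iff_inv_smul_mem]
  simp [MulAut.conj]

/-- **Lemma.** Let `p₁ ≠ p₂` be primes, `P₁ ∈ Syl_{p₁}(G)`, `P₂ ∈ Syl_{p₂}(G)` with
`G = N_G(P₁)·N_G(P₂)`. Then for all `Q₁ ∈ Syl_{p₁}(G)`, `Q₂ ∈ Syl_{p₂}(G)` there are at least
`|N_G(P₁) ∩ N_G(P₂)|` elements `x ∈ G` with `P₁^x = Q₁` and `P₂^x = Q₂`. -/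
theorem sylow_sync_count_of_normalizer_product
    (G : Type*) [Group G] [Finite G] (p₁ p₂ : ℕ) (hp₁ : p₁.Prime) (hp₂ : p₂.Prime)
    (hne : p₁ ≠ p₂) (P₁ : Sylow p₁ G) (P₂ : Sylow p₂ G)
    (hprod : (Subgroup.normalizer ((P₁ : Subgroup G) : Set G) : Set G) * (Subgroup.normalizer ((P₂ : Subgroup G) : Set G) : Set G) =
      Set.univ)
    (Q₁ : Sylow p₁ G) (Q₂ : Sylow p₂ G) :
    Nat.card (Subgroup.normalizer ((P₁ : Subgroup G) : Set G) ⊓ Subgroup.normalizer ((P₂ : Subgroup G) : Set G) : Subgroup G) ≤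
      Nat.card {x : G // conjSub (P₁ : Subgroup G) x = (Q₁ : Subgroup G) ∧
        conjSub (P₂ : Subgroup G) x = (Q₂ : Subgroup G)} := by
  haveI : Fact p₁.Prime := ⟨hp₁⟩
  haveI : Fact p₂.Prime := ⟨hp₂⟩
  obtain ⟨a, ha⟩ := MulAction.exists_smul_eq G P₁ Q₁
  obtain ⟨b, hb⟩ := MulAction.exists_smul_eq G P₂ Q₂
  have ha' := conjSub_eq_of_smul ha
  have hb' := conjSub_eq_of_smul hb
  -- find m₁ ∈ N(P₁), m₂ ∈ N(P₂) with m₁ * m₂ = a⁻¹ * b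
  have hmem : a⁻¹ * b ∈ (Subgroup.normalizer ((P₁ : Subgroup G) : Set G) : Set G) *
      (Subgroup.normalizer ((P₂ : Subgroup G) : Set G) : Set G) := by rw [hprod]; trivial
  obtain ⟨m₁, hm₁, m₂, hm₂, hm⟩ := hmem
  set x₀ : G := m₁⁻¹ * a⁻¹ with hx₀
  have hx₀' : x₀ = m₂ * b⁻¹ := by
    rw [hx₀]
    have hm' : m₁ * m₂ = a⁻¹ * b := hm
    have : a⁻¹ = m₁ * m₂ * b⁻¹ := by rw [hm']; group
    rw [this]; group
  have h1 : conjSub (P₁ : Subgroup G) x₀ = (Q₁ : Subgroup G) := by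
    rw [hx₀, conjSub_mul, conjSub_of_mem_normalizer (inv_mem hm₁), ha']
  have h2 : conjSub (P₂ : Subgroup G) x₀ = (Q₂ : Subgroup G) := by
    rw [hx₀', conjSub_mul, conjSub_of_mem_normalizer hm₂, hb']
  apply Nat.card_le_card_of_injective
    (fun n : (Subgroup.normalizer ((P₁ : Subgroup G) : Set G) ⊓ Subgroup.normalizer ((P₂ : Subgroup G) : Set G) : Subgroup G) =>
      (⟨(n : G) * x₀, by
        constructor
        · rw [conjSub_mul, conjSub_of_mem_normalizer n.2.1, h1]
        · rw [conjSub_mul, conjSub_of_mem_normalizer n.2.2, h2]⟩ :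
        {x : G // conjSub (P₁ : Subgroup G) x = (Q₁ : Subgroup G) ∧
          conjSub (P₂ : Subgroup G) x = (Q₂ : Subgroup G)}))
  intro n m h
  have : (n : G) * x₀ = (m : G) * x₀ := congrArg Subtype.val h
  exact Subtype.ext (mul_right_cancel this)
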